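/- For every ε > 0 there exists L > 0 with the following property: for all Φ₁, Φ₂, Φ₃ ∈ [0, π/2] and all r₁, r₂, r₃ > 0 with r₁ > L, the angle θ₁ = arccos((cosh ℓ₂ cosh ℓ₃ − cosh ℓ₁)/(sinh ℓ₂ sinh ℓ₃)) satisfies θ₁ < ε, where ℓ₁ = arcosh(cosh r₂ cosh r₃ + sinh r₂ sinh r₃ cos Φ₁), ℓ₂ = arcosh(cosh r₃ cosh r₁ + sinh r₃ sinh r₁ cos Φ₂), ℓ₃ = arcosh(cosh r₁ cosh r₂ + sinh r₁ sinh r₂ cos Φ₃). -/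

import Mathlib

open Real

/-- The inverse hyperbolic cosine (on `[1, ∞)`). -/
noncomputable def arcosh (x : ℝ) : ℝ := Real.log (x + Real.sqrt (x ^ 2 - 1))

lemma inv_aux {x : ℝ} (hx : 1 ≤ x) :
    (x + Real.sqrt (x ^ 2 - 1))⁻¹ = x - Real.sqrt (x ^ 2 - 1) := by
  have h1 : (0:ℝ) ≤ x ^ 2 - 1 := by nlinarith
  have hs : Real.sqrt (x ^ 2 - 1) ^ 2 = x ^ 2 - 1 := Real.sq_sqrt h1
  refine inv_eq_of_mul_eq_one_right ?_
  nlinarith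

lemma pos_aux {x : ℝ} (hx : 1 ≤ x) : 0 < x + Real.sqrt (x ^ 2 - 1) := by
  have := Real.sqrt_nonneg (x ^ 2 - 1); linarith

lemma cosh_arcosh {x : ℝ} (hx : 1 ≤ x) : Real.cosh (_root_.arcosh x) = x := by
  rw [_root_.arcosh, Real.cosh_eq, Real.exp_log (pos_aux hx), Real.exp_neg,
    Real.exp_log (pos_aux hx), inv_aux hx]
  ring

lemma sinh_arcosh {x : ℝ} (hx : 1 ≤ x) :
    Real.sinh (_root_.arcosh x) = Real.sqrt (x ^ 2 - 1) := by
  rw [_root_.arcosh, Real.sinh_eq, Real.exp_log (pos_aux hx), Real.exp_neg,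
    Real.exp_log (pos_aux hx), inv_aux hx]
  ring

set_option maxHeartbeats 1000000 in
theorem hyperbolic_angle_small_of_large_radius :
    ∀ ε > 0, ∃ L > 0,
      ∀ Φ₁ Φ₂ Φ₃ : ℝ, Φ₁ ∈ Set.Icc 0 (π / 2) → Φ₂ ∈ Set.Icc 0 (π / 2) →
        Φ₃ ∈ Set.Icc 0 (π / 2) →
      ∀ r₁ r₂ r₃ : ℝ, 0 < r₁ → 0 < r₂ → 0 < r₃ → r₁ > L →
        Real.arccos
          ((Real.cosh (_root_.arcosh (Real.cosh r₃ * Real.cosh r₁ +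
              Real.sinh r₃ * Real.sinh r₁ * Real.cos Φ₂)) *
            Real.cosh (_root_.arcosh (Real.cosh r₁ * Real.cosh r₂ +
              Real.sinh r₁ * Real.sinh r₂ * Real.cos Φ₃)) -
            Real.cosh (_root_.arcosh (Real.cosh r₂ * Real.cosh r₃ +
              Real.sinh r₂ * Real.sinh r₃ * Real.cos Φ₁))) /
           (Real.sinh (_root_.arcosh (Real.cosh r₃ * Real.cosh r₁ +
              Real.sinh r₃ * Real.sinh r₁ * Real.cos Φ₂)) *
            Real.sinh (_root_.arcosh (Real.cosh r₁ * Real.cosh r₂ +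
              Real.sinh r₁ * Real.sinh r₂ * Real.cos Φ₃)))) < ε := by
  intro ε hε
  have hπ : (3:ℝ) < π := Real.pi_gt_three
  set m : ℝ := min ε 1 with hmdef
  have hm0 : 0 < m := lt_min hε one_pos
  have hm1 : m ≤ 1 := min_le_right _ _
  have hmε : m ≤ ε := min_le_left _ _
  have hcosm1 : Real.cos m < 1 := by
    have := Real.cos_lt_cos_of_nonneg_of_le_pi le_rfl (by linarith) hm0
    simpa using this
  have hcosm0 : 0 ≤ Real.cos m :=
    Real.cos_nonneg_of_mem_Icc ⟨by linarith, by linarith⟩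
  set δ : ℝ := 1 - Real.cos m with hδdef
  have hδ0 : 0 < δ := by simp only [hδdef]; linarith
  have hδ1 : δ ≤ 1 := by simp only [hδdef]; linarith
  have hsq : 0 < Real.sqrt (2 / δ) := Real.sqrt_pos.mpr (by positivity)
  refine ⟨max 1 (Real.log (2 * Real.sqrt (2 / δ))),
    lt_of_lt_of_le one_pos (le_max_left _ _), ?_⟩
  intro Φ₁ Φ₂ Φ₃ hΦ₁ hΦ₂ hΦ₃ r₁ r₂ r₃ hr₁ hr₂ hr₃ hr₁L
  have hcΦ₁ : 0 ≤ Real.cos Φ₁ := Real.cos_nonneg_of_mem_Icc ⟨by linarith [hΦ₁.1], hΦ₁.2⟩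
  have hcΦ₂ : 0 ≤ Real.cos Φ₂ := Real.cos_nonneg_of_mem_Icc ⟨by linarith [hΦ₂.1], hΦ₂.2⟩
  have hcΦ₃ : 0 ≤ Real.cos Φ₃ := Real.cos_nonneg_of_mem_Icc ⟨by linarith [hΦ₃.1], hΦ₃.2⟩
  have hcΦ₁' : Real.cos Φ₁ ≤ 1 := Real.cos_le_one _
  set c₁ := Real.cosh r₁; set c₂ := Real.cosh r₂; set c₃ := Real.cosh r₃
  set s₁ := Real.sinh r₁; set s₂ := Real.sinh r₂; set s₃ := Real.sinh r₃
  have hc₂1 : 1 ≤ c₂ := Real.one_le_cosh r₂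
  have hc₃1 : 1 ≤ c₃ := Real.one_le_cosh r₃
  have hs₁ : 0 < s₁ := Real.sinh_pos_iff.mpr hr₁
  have hs₂ : 0 < s₂ := Real.sinh_pos_iff.mpr hr₂
  have hs₃ : 0 < s₃ := Real.sinh_pos_iff.mpr hr₃
  have hsc₂ : s₂ ≤ c₂ := by
    have := Real.cosh_sub_sinh r₂; have := Real.exp_pos (-r₂); simp only [c₂, s₂]; linarith
  have hsc₃ : s₃ ≤ c₃ := by
    have := Real.cosh_sub_sinh r₃; have := Real.exp_pos (-r₃); simp only [c₃, s₃]; linarith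
  -- cosh r₁ is large
  have hc₁big : Real.sqrt (2 / δ) < c₁ := by
    have h1 : Real.log (2 * Real.sqrt (2 / δ)) < r₁ :=
      lt_of_le_of_lt (le_max_right _ _) hr₁L
    have h2 : 2 * Real.sqrt (2 / δ) < Real.exp r₁ := by
      calc 2 * Real.sqrt (2 / δ) = Real.exp (Real.log (2 * Real.sqrt (2 / δ))) :=
            (Real.exp_log (by positivity)).symm
        _ < Real.exp r₁ := Real.exp_lt_exp.mpr h1
    have h3 : Real.exp r₁ / 2 ≤ c₁ := by
      have := Real.exp_pos (-r₁)
      simp only [c₁, Real.cosh_eq]; linarith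
    linarith
  have hc₁sq : 2 / δ < c₁ ^ 2 := by
    rw [← Real.sq_sqrt (show (0:ℝ) ≤ 2 / δ by positivity)]
    exact pow_lt_pow_left₀ hc₁big (Real.sqrt_nonneg _) two_ne_zero
  have hc₁1 : 1 ≤ c₁ := Real.one_le_cosh r₁
  have hc₁2 : 2 < c₁ ^ 2 := by
    have : (2:ℝ) ≤ 2 / δ := by
      rw [le_div_iff₀ hδ0]; linarith
    linarith
  set A := c₃ * c₁ + s₃ * s₁ * Real.cos Φ₂ with hAdef
  set B := c₁ * c₂ + s₁ * s₂ * Real.cos Φ₃ with hBdef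
  set C := c₂ * c₃ + s₂ * s₃ * Real.cos Φ₁ with hCdef
  have hAc : c₃ * c₁ ≤ A := by
    rw [hAdef]; linarith [mul_nonneg (mul_nonneg hs₃.le hs₁.le) hcΦ₂]
  have hBc : c₁ * c₂ ≤ B := by
    rw [hBdef]; linarith [mul_nonneg (mul_nonneg hs₁.le hs₂.le) hcΦ₃]
  have hcc31 : (1:ℝ) ≤ c₃ * c₁ := by
    have := mul_le_mul hc₃1 hc₁1 zero_le_one (by linarith : (0:ℝ) ≤ c₃)
    linarith
  have hcc12 : (1:ℝ) ≤ c₁ * c₂ := by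
    have := mul_le_mul hc₁1 hc₂1 zero_le_one (by linarith : (0:ℝ) ≤ c₁)
    linarith
  have hcc23 : (1:ℝ) ≤ c₂ * c₃ := by
    have := mul_le_mul hc₂1 hc₃1 zero_le_one (by linarith : (0:ℝ) ≤ c₂)
    linarith
  have hA1 : 1 ≤ A := le_trans hcc31 hAc
  have hB1 : 1 ≤ B := le_trans hcc12 hBc
  have hC1 : 1 ≤ C := by
    rw [hCdef]; linarith [mul_nonneg (mul_nonneg hs₂.le hs₃.le) hcΦ₁]
  have hCc : C ≤ 2 * (c₂ * c₃) := by
    rw [hCdef]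
    have h1 : s₂ * s₃ * Real.cos Φ₁ ≤ s₂ * s₃ * 1 :=
      mul_le_mul_of_nonneg_left hcΦ₁' (mul_nonneg hs₂.le hs₃.le)
    have h2 : s₂ * s₃ ≤ c₂ * c₃ :=
      mul_le_mul hsc₂ hsc₃ hs₃.le (by linarith : (0:ℝ) ≤ c₂)
    linarith
  have hAB : c₁ ^ 2 * (c₂ * c₃) ≤ A * B := by
    calc c₁ ^ 2 * (c₂ * c₃) = (c₃ * c₁) * (c₁ * c₂) := by ring
      _ ≤ A * B := mul_le_mul hAc hBc (by linarith) (by linarith)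
  rw [_root_.cosh_arcosh hA1, _root_.cosh_arcosh hB1, _root_.cosh_arcosh hC1, _root_.sinh_arcosh hA1,
    _root_.sinh_arcosh hB1]
  set D := Real.sqrt (A ^ 2 - 1) * Real.sqrt (B ^ 2 - 1) with hDdef
  have hc₁1' : 1 < c₁ := by
    have h : (1:ℝ) ^ 2 < c₁ ^ 2 := by rw [one_pow]; linarith
    exact lt_of_pow_lt_pow_left₀ 2 (by linarith) h
  have hA1' : 1 < A :=
    lt_of_lt_of_le (lt_of_lt_of_le hc₁1' (le_mul_of_one_le_left (by linarith) hc₃1)) hAc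
  have hB1' : 1 < B :=
    lt_of_lt_of_le (lt_of_lt_of_le hc₁1' (le_mul_of_one_le_right (by linarith) hc₂1)) hBc
  have hDpos : 0 < D :=
    mul_pos (Real.sqrt_pos.mpr (by nlinarith [hA1']))
      (Real.sqrt_pos.mpr (by nlinarith [hB1']))
  have hDA : Real.sqrt (A ^ 2 - 1) ≤ A := by
    calc Real.sqrt (A ^ 2 - 1) ≤ Real.sqrt (A ^ 2) := Real.sqrt_le_sqrt (by linarith)
      _ = A := by rw [Real.sqrt_sq (by linarith)]
  have hDB : Real.sqrt (B ^ 2 - 1) ≤ B := by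
    calc Real.sqrt (B ^ 2 - 1) ≤ Real.sqrt (B ^ 2) := Real.sqrt_le_sqrt (by linarith)
      _ = B := by rw [Real.sqrt_sq (by linarith)]
  have hDAB : D ≤ A * B :=
    mul_le_mul hDA hDB (Real.sqrt_nonneg _) (by linarith)
  -- key inequality: C < δ * (A * B)
  have hkey : C < δ * (A * B) := by
    have hcc : (0:ℝ) < c₂ * c₃ := mul_pos (by linarith) (by linarith)
    have hδc : 2 < δ * c₁ ^ 2 := by
      rw [div_lt_iff₀ hδ0] at hc₁sq; linarith [mul_comm (c₁ ^ 2) δ]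
    have h1 : 2 * (c₂ * c₃) < (δ * c₁ ^ 2) * (c₂ * c₃) :=
      mul_lt_mul_of_pos_right hδc hcc
    have h2 : δ * (c₁ ^ 2 * (c₂ * c₃)) ≤ δ * (A * B) :=
      mul_le_mul_of_nonneg_left hAB hδ0.le
    calc C ≤ 2 * (c₂ * c₃) := hCc
      _ < (δ * c₁ ^ 2) * (c₂ * c₃) := h1
      _ = δ * (c₁ ^ 2 * (c₂ * c₃)) := by ring
      _ ≤ δ * (A * B) := h2
  have hX : Real.cos m < (A * B - C) / D := by
    rw [lt_div_iff₀ hDpos]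
    have h1 : Real.cos m * D ≤ Real.cos m * (A * B) :=
      mul_le_mul_of_nonneg_left hDAB hcosm0
    have h2 : Real.cos m * (A * B) < A * B - C := by
      have hc : Real.cos m = 1 - δ := by rw [hδdef]; ring
      rw [hc]; linarith [hkey]
    linarith
  set X := (A * B - C) / D with hXdef
  rcases le_or_gt 1 X with hX1 | hX1
  · rw [Real.arccos_of_one_le hX1]; exact hε
  · have harcsin : π / 2 - m < Real.arcsin X :=
      (Real.lt_arcsin_iff_sin_lt ⟨by linarith, by linarith⟩ ⟨by linarith, hX1.le⟩).mpr
        (by rw [Real.sin_pi_div_two_sub]; linarith)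
    have harc : Real.arccos X < m := by rw [Real.arccos]; linarith
    linarith
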